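/- Let φ be a smoothing kernel with associated set G and constant M_φ, and let f ∈ C_{‖·‖}. Then the smoothing S[f] is continuously differentiable with Lipschitz continuous gradient: ‖∇S[f](x) − ∇S[f](y)‖_* ≤ M_φ ‖x−y‖ for all x, y ∈ E. -/

import Mathlib

open Set Pointwise
open Metric

set_option linter.unusedSectionVars false

/-- `N` is a norm on the real vector space `E`. -/
structure IsNorm {E : Type*} [AddCommGroup E] [Module ℝ E] (N : E → ℝ) : Prop where
  nonneg : ∀ x, 0 ≤ N x
  eq_zero_iff : ∀ x, N x = 0 ↔ x = 0
  smul : ∀ (c : ℝ) (x : E), N (c • x) = |c| * N x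
  add_le : ∀ x y, N (x + y) ≤ N x + N y

/-- The norm dual to `N` (w.r.t. the inner product identification). -/
noncomputable def dualNorm {E : Type*} [NormedAddCommGroup E] [InnerProductSpace ℝ E]
    (N : E → ℝ) (ξ : E) : ℝ :=
  sSup ((fun x => (inner ℝ ξ x : ℝ)) '' {x : E | N x ≤ 1})

/-- `f` is Lipschitz continuous with constant 1 w.r.t. the norm `N`. -/
def LipWrt {E : Type*} [AddCommGroup E] [Module ℝ E] (N : E → ℝ) (f : E → ℝ) : Prop :=
  ∀ x y, |f x - f y| ≤ N (x - y)

/-- Membership in the class `C_{‖·‖}`: convex and 1-Lipschitz w.r.t. `N`. -/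
def MemC {E : Type*} [AddCommGroup E] [Module ℝ E] (N : E → ℝ) (f : E → ℝ) : Prop :=
  ConvexOn ℝ Set.univ f ∧ LipWrt N f

/-- A smoothing kernel: a twice continuously differentiable convex function `φ` on an open
convex set `dom`, with `φ(0) = 0`, `∇φ(0) = 0` (property A), together with a compact convex
set `G ⊆ dom` with `0 ∈ int G` and `φ > N` on `∂G` (property B). -/
structure SmoothingKernel (E : Type*) [NormedAddCommGroup E] [InnerProductSpace ℝ E]
    [FiniteDimensional ℝ E] (N : E → ℝ) where
  dom : Set E
  φ : E → ℝ
  dom_open : IsOpen dom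
  dom_convex : Convex ℝ dom
  φ_smooth : ContDiffOn ℝ 2 φ dom
  φ_convex : ConvexOn ℝ dom φ
  zero_mem_dom : (0 : E) ∈ dom
  φ_zero : φ 0 = 0
  grad_zero : gradient φ 0 = 0
  G : Set E
  G_sub_dom : G ⊆ dom
  G_compact : IsCompact G
  G_convex : Convex ℝ G
  zero_mem_int : (0 : E) ∈ interior G
  φ_gt_norm : ∀ x ∈ frontier G, N x < φ x

/-- Property C: bound `⟨e, ∇²φ(h) e⟩ ≤ M ‖e‖²` on the Hessian quadratic form on `G`. -/
def HessBound {E : Type*} [NormedAddCommGroup E] [InnerProductSpace ℝ E]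
    [FiniteDimensional ℝ E] {N : E → ℝ} (K : SmoothingKernel E N) (M : ℝ) : Prop :=
  ∀ h ∈ K.G, ∀ e : E, iteratedFDeriv ℝ 2 K.φ h ![e, e] ≤ M * N e ^ 2

/-- The smoothing `S[f](x) = min_{h ∈ Dom φ} [f(x+h) + φ(h)]`. -/
noncomputable def smoothing {E : Type*} [NormedAddCommGroup E] [InnerProductSpace ℝ E]
    [FiniteDimensional ℝ E] {N : E → ℝ} (K : SmoothingKernel E N) (f : E → ℝ) (x : E) : ℝ :=
  sInf ((fun h => f (x + h) + K.φ h) '' K.dom)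

variable {E : Type*} [NormedAddCommGroup E] [InnerProductSpace ℝ E]
  [FiniteDimensional ℝ E]

section NormLemmas
variable {N : E → ℝ} (hN : IsNorm N)
include hN

lemma IsNorm.zero : N (0:E) = 0 := (hN.eq_zero_iff 0).mpr rfl

lemma IsNorm.neg (x : E) : N (-x) = N x := by
  have := hN.smul (-1) x; simpa using this

lemma IsNorm.convexOn : ConvexOn ℝ univ N := by
  refine ⟨convex_univ, fun x _ y _ a b ha hb _ => ?_⟩
  calc N (a • x + b • y) ≤ N (a • x) + N (b • y) := hN.add_le _ _
    _ = a * N x + b * N y := by rw [hN.smul, hN.smul, abs_of_nonneg ha, abs_of_nonneg hb]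

lemma IsNorm.continuous : Continuous N := by
  have h := hN.convexOn.locallyLipschitz
  exact h.continuous

lemma IsNorm.exists_bounds [Nontrivial E] :
    ∃ c C : ℝ, 0 < c ∧ 0 < C ∧ ∀ x : E, c * ‖x‖ ≤ N x ∧ N x ≤ C * ‖x‖ := by
  have hsph : IsCompact (sphere (0:E) 1) := isCompact_sphere 0 1
  have hne : (sphere (0:E) 1).Nonempty := NormedSpace.sphere_nonempty.mpr zero_le_one
  obtain ⟨xm, hxm, hmin⟩ := hsph.exists_isMinOn hne hN.continuous.continuousOn
  obtain ⟨xM, hxM, hmax⟩ := hsph.exists_isMaxOn hne hN.continuous.continuousOn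
  have hxm0 : xm ≠ 0 := by
    intro h; rw [mem_sphere_iff_norm, h] at hxm; simp at hxm
  refine ⟨N xm, N xM + 1, ?_, ?_, fun x => ?_⟩
  · rcases (hN.nonneg xm).lt_or_eq with h | h
    · exact h
    · exact absurd ((hN.eq_zero_iff xm).mp h.symm) hxm0
  · have := hN.nonneg xM; linarith
  · rcases eq_or_ne x 0 with rfl | hx
    · simp [hN.zero]
    · have hnx : ‖x‖ ≠ 0 := norm_ne_zero_iff.mpr hx
      have hmem : ‖x‖⁻¹ • x ∈ sphere (0:E) 1 := by
        simp [norm_smul, abs_of_nonneg (inv_nonneg.mpr (norm_nonneg x)), inv_mul_cancel₀ hnx]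
      have h1 : N xm ≤ N (‖x‖⁻¹ • x) := hmin hmem
      have h2 : N (‖x‖⁻¹ • x) ≤ N xM := hmax hmem
      rw [hN.smul, abs_of_nonneg (inv_nonneg.mpr (norm_nonneg x))] at h1 h2
      constructor
      · rw [mul_comm]
        calc ‖x‖ * N xm ≤ ‖x‖ * (‖x‖⁻¹ * N x) := by
              apply mul_le_mul_of_nonneg_left h1 (norm_nonneg x)
          _ = N x := by field_simp
      · have : N x = ‖x‖ * (‖x‖⁻¹ * N x) := by field_simp
        rw [this]
        have h3 : ‖x‖⁻¹ * N x ≤ N xM := h2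
        nlinarith [norm_nonneg x, hN.nonneg x]

end NormLemmas

section DualLemmas
variable {N : E → ℝ} (hN : IsNorm N) {c C : ℝ} (hc : 0 < c) (hcl : ∀ x : E, c * ‖x‖ ≤ N x)
include hN hc hcl

lemma unitBall_compact : IsCompact {x : E | N x ≤ 1} := by
  have hclosed : IsClosed {x : E | N x ≤ 1} := by
    have : {x : E | N x ≤ 1} = N ⁻¹' Iic 1 := rfl
    rw [this]; exact IsClosed.preimage hN.continuous isClosed_Iic
  have hbdd : Bornology.IsBounded {x : E | N x ≤ 1} := by
    apply Metric.isBounded_iff_subset_closedBall (0:E) |>.mpr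
    refine ⟨c⁻¹, fun x hx => ?_⟩
    simp only [Metric.mem_closedBall, dist_zero_right]
    have := (hcl x).trans hx
    rw [← le_div_iff₀' hc] at this
    simpa [div_eq_inv_mul] using this
  exact Metric.isCompact_of_isClosed_isBounded hclosed hbdd

lemma dualNorm_bddAbove (ξ : E) :
    BddAbove ((fun x => (inner ℝ ξ x : ℝ)) '' {x : E | N x ≤ 1}) :=
  ((unitBall_compact hN hc hcl).image (continuous_const.inner continuous_id)).bddAbove

lemma le_dualNorm (ξ x : E) (hx : N x ≤ 1) : (inner ℝ ξ x : ℝ) ≤ dualNorm N ξ :=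
  le_csSup (dualNorm_bddAbove hN hc hcl ξ) ⟨x, hx, rfl⟩

lemma dualNorm_nonneg (ξ : E) : 0 ≤ dualNorm N ξ := by
  have := le_dualNorm hN hc hcl ξ 0 (by rw [hN.zero]; norm_num)
  simpa using this

lemma dualNorm_exists_max (ξ : E) :
    ∃ x : E, N x ≤ 1 ∧ dualNorm N ξ = (inner ℝ ξ x : ℝ) := by
  have hne : {x : E | N x ≤ 1}.Nonempty := ⟨0, by simp [hN.zero]⟩
  have hcont : Continuous fun x : E => (inner ℝ ξ x : ℝ) := continuous_const.inner continuous_id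
  obtain ⟨x, hx, hmax⟩ := (unitBall_compact hN hc hcl).exists_isMaxOn hne hcont.continuousOn
  refine ⟨x, hx, le_antisymm ?_ (le_dualNorm hN hc hcl ξ x hx)⟩
  apply csSup_le (hne.image _)
  rintro r ⟨y, hy, rfl⟩
  exact hmax hy

lemma inner_le_dualNorm_mul (ξ x : E) : (inner ℝ ξ x : ℝ) ≤ dualNorm N ξ * N x := by
  rcases eq_or_ne x 0 with rfl | hx
  · simp [hN.zero]
  · have hNx : 0 < N x := by
      rcases (hN.nonneg x).lt_or_eq with h | h
      · exact h
      · exact absurd ((hN.eq_zero_iff x).mp h.symm) hx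
    have hmem : N ((N x)⁻¹ • x) ≤ 1 := by
      rw [hN.smul, abs_of_nonneg (inv_nonneg.mpr hNx.le), inv_mul_cancel₀ hNx.ne']
    have := le_dualNorm hN hc hcl ξ _ hmem
    rw [inner_smul_right] at this
    calc (inner ℝ ξ x : ℝ) = N x * ((N x)⁻¹ * inner ℝ ξ x) := by field_simp
      _ ≤ N x * dualNorm N ξ := mul_le_mul_of_nonneg_left this hNx.le
      _ = dualNorm N ξ * N x := mul_comm _ _

lemma dualNorm_add_le (ξ η : E) :
    dualNorm N (ξ + η) ≤ dualNorm N ξ + dualNorm N η := by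
  obtain ⟨x, hx, hmax⟩ := dualNorm_exists_max hN hc hcl (ξ + η)
  rw [hmax, inner_add_left]
  exact add_le_add (le_dualNorm hN hc hcl ξ x hx) (le_dualNorm hN hc hcl η x hx)

lemma dualNorm_zero : dualNorm N (0:E) = 0 := by
  obtain ⟨x, _, hmax⟩ := dualNorm_exists_max hN hc hcl (0:E)
  rw [hmax, inner_zero_left]

lemma norm_le_dualNorm (hCu : ∀ x : E, N x ≤ C * ‖x‖) (hC : 0 < C) (ξ : E) :
    ‖ξ‖ ≤ C * dualNorm N ξ := by
  rcases eq_or_ne ξ 0 with rfl | hξ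
  · simp [dualNorm_zero hN hc hcl]
  · have hn : (0:ℝ) < ‖ξ‖ := norm_pos_iff.mpr hξ
    have hmem : N ((C * ‖ξ‖)⁻¹ • ξ) ≤ 1 := by
      have := hCu ((C * ‖ξ‖)⁻¹ • ξ)
      rw [norm_smul] at this
      have h2 : C * (|(C * ‖ξ‖)⁻¹| * ‖ξ‖) = 1 := by
        rw [abs_of_nonneg (by positivity)]; field_simp
      calc N ((C * ‖ξ‖)⁻¹ • ξ) ≤ C * (‖(C * ‖ξ‖)⁻¹‖ * ‖ξ‖) := this
        _ = 1 := by rw [Real.norm_eq_abs]; exact h2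
    have := le_dualNorm hN hc hcl ξ _ hmem
    rw [inner_smul_right, real_inner_self_eq_norm_sq] at this
    have h3 : (C * ‖ξ‖)⁻¹ * ‖ξ‖^2 = ‖ξ‖ / C := by field_simp
    rw [h3, div_le_iff₀ hC] at this
    linarith [this]

end DualLemmas

section KernelLemmas
variable {N : E → ℝ} (K : SmoothingKernel E N)

lemma K_diffAt {x : E} (hx : x ∈ K.dom) : DifferentiableAt ℝ K.φ x :=
  (K.φ_smooth.contDiffAt (K.dom_open.mem_nhds hx)).differentiableAt (by norm_num)

lemma K_fderiv_eq (x : E) :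
    fderiv ℝ K.φ x = InnerProductSpace.toDual ℝ E (gradient K.φ x) := by
  rw [gradient, LinearIsometryEquiv.apply_symm_apply]

lemma K_fderiv_apply (x v : E) :
    fderiv ℝ K.φ x v = (inner ℝ (gradient K.φ x) v : ℝ) := by
  rw [K_fderiv_eq]; rfl

lemma K_fderiv_zero : fderiv ℝ K.φ 0 = 0 := by
  rw [K_fderiv_eq, K.grad_zero, map_zero]

end KernelLemmas

/-- subgradient inequality for differentiable convex functions -/
lemma convex_ge_of_fderiv {s : Set E} {u : E → ℝ} (hu : ConvexOn ℝ s u) {a : E}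
    (hd : DifferentiableAt ℝ u a) (ha : a ∈ s) {b : E} (hb : b ∈ s) :
    u a + fderiv ℝ u a (b - a) ≤ u b := by
  set e := b - a with he
  set q : ℝ → E := fun t : ℝ => a + t • e with hq
  have hline : HasDerivAt q e 0 := by
    have := ((hasDerivAt_id (0:ℝ)).smul_const e).const_add a
    simp only [one_smul] at this; exact this
  have hg : HasDerivAt (u ∘ q) (fderiv ℝ u a e) 0 := by
    have h0 : q 0 = a := by simp [hq]
    have hd' : HasFDerivAt u (fderiv ℝ u a) (q 0) := by rw [h0]; exact hd.hasFDerivAt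
    exact hd'.comp_hasDerivAt 0 hline
  have hslope : Filter.Tendsto (slope (u ∘ q) 0) (nhdsWithin 0 (Set.Ioi 0))
      (nhds (fderiv ℝ u a e)) := by
    have h1 := (hg.hasDerivWithinAt (s := Set.Ioi (0:ℝ)))
    have h2 := hasDerivWithinAt_iff_tendsto_slope.mp h1
    have h3 : Set.Ioi (0:ℝ) \ {0} = Set.Ioi 0 := by
      ext t; simp only [Set.mem_diff, Set.mem_Ioi, Set.mem_singleton_iff]
      constructor
      · exact fun h => h.1
      · intro h; exact ⟨h, by linarith⟩
    rwa [h3] at h2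
  have key : ∀ t ∈ Set.Ioc (0:ℝ) 1, slope (u ∘ q) 0 t ≤ u b - u a := by
    intro t ht
    have hconv : u (a + t • e) ≤ (1 - t) * u a + t * u b := by
      have h1 : a + t • e = (1 - t) • a + t • b := by
        rw [he]; module
      rw [h1]
      exact hu.2 ha hb (by linarith [ht.2]) ht.1.le (by ring)
    have hq0 : (u ∘ q) 0 = u a := by simp [hq]
    have hqt : (u ∘ q) t = u (a + t • e) := rfl
    rw [slope_def_field, hq0, hqt, sub_zero, div_le_iff₀ ht.1]
    nlinarith [ht.1]
  have hev : ∀ᶠ t in nhdsWithin 0 (Set.Ioi (0:ℝ)), slope (u ∘ q) 0 t ≤ u b - u a := by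
    filter_upwards [Ioc_mem_nhdsGT_of_mem (Set.left_mem_Ico.mpr one_pos)] with t ht
    exact key t ht
  have := le_of_tendsto hslope hev
  linarith

section Taylor
variable {N : E → ℝ} (K : SmoothingKernel E N)

lemma phi_nonneg {h : E} (hh : h ∈ K.dom) : 0 ≤ K.φ h := by
  have := convex_ge_of_fderiv K.φ_convex (K_diffAt K K.zero_mem_dom) K.zero_mem_dom hh
  rw [K_fderiv_zero, K.φ_zero] at this
  simpa using this

lemma taylor_upper (hN : IsNorm N) {M : ℝ} (hM : HessBound K M) {a b : E}
    (ha : a ∈ K.G) (hb : b ∈ K.G) :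
    K.φ b ≤ K.φ a + (inner ℝ (gradient K.φ a) (b - a) : ℝ) + M / 2 * N (b - a) ^ 2 := by
  set e := b - a with he
  set p : ℝ → E := fun t => a + t • e with hp
  have hp0 : p 0 = a := by simp [hp]
  have hp1 : p 1 = b := by simp [hp, he]
  have hpG : ∀ t ∈ Set.Icc (0:ℝ) 1, p t ∈ K.G := fun t ht =>
    K.G_convex.add_smul_sub_mem ha hb ht
  have hpdom : ∀ t ∈ Set.Icc (0:ℝ) 1, p t ∈ K.dom := fun t ht => K.G_sub_dom (hpG t ht)
  have hline : ∀ t : ℝ, HasDerivAt p e t := by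
    intro t
    have := ((hasDerivAt_id t).smul_const e).const_add a
    simp only [one_smul] at this; exact this
  set Φ := fderiv ℝ K.φ with hΦ
  set g1 : ℝ → ℝ := fun t => Φ (p t) e with hg1def
  -- first derivative of φ ∘ p
  have hg : ∀ t ∈ Set.Icc (0:ℝ) 1, HasDerivAt (fun s => K.φ (p s)) (g1 t) t := by
    intro t ht
    exact (K_diffAt K (hpdom t ht)).hasFDerivAt.comp_hasDerivAt t (hline t)
  -- second derivative
  have hΦdiff : ∀ t ∈ Set.Icc (0:ℝ) 1, DifferentiableAt ℝ Φ (p t) := by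
    intro t ht
    have hct : ContDiffAt ℝ 2 K.φ (p t) :=
      K.φ_smooth.contDiffAt (K.dom_open.mem_nhds (hpdom t ht))
    exact (hct.fderiv_right (m := 1) (by norm_num)).differentiableAt one_ne_zero
  have hg1 : ∀ t ∈ Set.Icc (0:ℝ) 1,
      HasDerivAt g1 (fderiv ℝ Φ (p t) e e) t := by
    intro t ht
    have h2 : HasDerivAt (fun s => Φ (p s)) (fderiv ℝ Φ (p t) e) t :=
      (hΦdiff t ht).hasFDerivAt.comp_hasDerivAt t (hline t)
    have h3 := (ContinuousLinearMap.apply ℝ ℝ e).hasFDerivAt.comp_hasDerivAt t h2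
    exact h3
  have hhess : ∀ t ∈ Set.Icc (0:ℝ) 1, fderiv ℝ Φ (p t) e e ≤ M * N e ^ 2 := by
    intro t ht
    have h1 := hM (p t) (hpG t ht) e
    have h2 : iteratedFDeriv ℝ 2 K.φ (p t) ![e, e] = fderiv ℝ Φ (p t) e e := by
      rw [iteratedFDeriv_two_apply]; simp [hΦ]
    rwa [h2] at h1
  set Q := M * N e ^ 2 with hQ
  set r' : ℝ → ℝ := fun t => g1 t - g1 0 - Q * t with hr'def
  set r : ℝ → ℝ := fun t => K.φ (p t) - K.φ (p 0) - t * g1 0 - Q / 2 * t ^ 2 with hrdef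
  have hr' : ∀ t ∈ Set.Icc (0:ℝ) 1, HasDerivAt r (r' t) t := by
    intro t ht
    have h1 := ((hg t ht).sub_const (K.φ (p 0)))
    have h2 := h1.sub ((hasDerivAt_id t).mul_const (g1 0))
    have h3 := h2.sub (((hasDerivAt_pow 2 t)).const_mul (Q / 2))
    convert h3 using 1
    · rfl
    · rfl
    · rfl
    simp [hr'def]; ring
  have hr'' : ∀ t ∈ Set.Icc (0:ℝ) 1, HasDerivAt r' (fderiv ℝ Φ (p t) e e - Q) t := by
    intro t ht
    have h1 := ((hg1 t ht).sub_const (g1 0)).sub ((hasDerivAt_id t).const_mul Q)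
    convert h1 using 1
    · rfl
    · rfl
    · rfl
    simp
  have har' : AntitoneOn r' (Set.Icc (0:ℝ) 1) := by
    apply antitoneOn_of_deriv_nonpos (convex_Icc 0 1)
    · exact fun t ht => (hr'' t ht).continuousAt.continuousWithinAt
    · intro t ht
      rw [interior_Icc] at ht
      exact ((hr'' t (Set.Ioo_subset_Icc_self ht)).differentiableAt).differentiableWithinAt
    · intro t ht
      rw [interior_Icc] at ht
      have ht' := Set.Ioo_subset_Icc_self ht
      rw [(hr'' t ht').deriv]
      have := hhess t ht'
      linarith
  have hr'0 : r' 0 = 0 := by simp [hr'def]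
  have hr'le : ∀ t ∈ Set.Icc (0:ℝ) 1, r' t ≤ 0 := by
    intro t ht
    have := har' (Set.left_mem_Icc.mpr zero_le_one) ht ht.1
    rwa [hr'0] at this
  have har : AntitoneOn r (Set.Icc (0:ℝ) 1) := by
    apply antitoneOn_of_deriv_nonpos (convex_Icc 0 1)
    · exact fun t ht => (hr' t ht).continuousAt.continuousWithinAt
    · intro t ht
      rw [interior_Icc] at ht
      exact ((hr' t (Set.Ioo_subset_Icc_self ht)).differentiableAt).differentiableWithinAt
    · intro t ht
      rw [interior_Icc] at ht
      have ht' := Set.Ioo_subset_Icc_self ht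
      rw [(hr' t ht').deriv]
      exact hr'le t ht'
  have hfin := har (Set.left_mem_Icc.mpr zero_le_one) (Set.right_mem_Icc.mpr zero_le_one)
    zero_le_one
  have hr0 : r 0 = 0 := by simp [hrdef]
  have hr1 : r 1 = K.φ b - K.φ a - g1 0 - Q / 2 := by
    simp [hrdef, hp0, hp1]
  have hg10 : g1 0 = (inner ℝ (gradient K.φ a) e : ℝ) := by
    rw [hg1def]
    simp only [hp0, hΦ]
    exact K_fderiv_apply K a e
  rw [hr0, hr1, hg10] at hfin
  have : Q / 2 = M / 2 * N e ^ 2 := by rw [hQ]; ring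
  linarith [hfin, this.le, this.ge]

end Taylor

section Frontier

lemma segment_hits_frontier {G : Set E} (hG : IsClosed G) {a b : E}
    (ha : a ∈ interior G) (hb : b ∉ G) :
    ∃ t : ℝ, t ∈ Set.Ico (0:ℝ) 1 ∧ a + t • (b - a) ∈ frontier G := by
  set p : ℝ → E := fun t => a + t • (b - a) with hp
  have hpc : Continuous p := continuous_const.add (continuous_id.smul continuous_const)
  set T := {t : ℝ | t ∈ Set.Icc (0:ℝ) 1 ∧ p t ∈ G} with hT
  have h0T : (0:ℝ) ∈ T := ⟨Set.left_mem_Icc.mpr zero_le_one, by simp [hp]; exact interior_subset ha⟩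
  have hTb : BddAbove T := BddAbove.mono (fun t ht => ht.1) bddAbove_Icc
  set t₀ := sSup T with ht₀
  have ht₀T : t₀ ∈ closure T := csSup_mem_closure ⟨0, h0T⟩ hTb
  have hTsub : T ⊆ p ⁻¹' G ∩ Set.Icc 0 1 := fun t ht => ⟨ht.2, ht.1⟩
  have hclosed : IsClosed (p ⁻¹' G ∩ Set.Icc 0 1) :=
    (hG.preimage hpc).inter isClosed_Icc
  have ht₀mem : p t₀ ∈ G ∧ t₀ ∈ Set.Icc (0:ℝ) 1 := by
    have := (closure_minimal hTsub hclosed) ht₀T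
    exact ⟨this.1, this.2⟩
  have ht₀lt : t₀ < 1 := by
    rcases lt_or_eq_of_le ht₀mem.2.2 with h | h
    · exact h
    · exfalso; apply hb
      have : p 1 = b := by simp [hp]
      rw [← this, ← h]; exact ht₀mem.1
  have hnotint : p t₀ ∉ interior G := by
    intro hint
    obtain ⟨ε, hε, hball⟩ := Metric.isOpen_iff.mp (isOpen_interior.preimage hpc) t₀ hint
    set t₁ := min (t₀ + ε / 2) ((t₀ + 1) / 2) with ht₁
    have h1 : t₀ < t₁ := by
      apply lt_min <;> linarith
    have h2 : t₁ ≤ 1 := by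
      apply (min_le_right _ _).trans; linarith
    have h3 : t₁ ∈ Metric.ball t₀ ε := by
      rw [Metric.mem_ball, Real.dist_eq, abs_of_pos (by linarith)]
      calc t₁ - t₀ ≤ (t₀ + ε/2) - t₀ := by linarith [min_le_left (t₀ + ε / 2) ((t₀ + 1) / 2)]
        _ < ε := by linarith
    have h4 : t₁ ∈ T := ⟨⟨by linarith [ht₀mem.2.1], h2⟩, interior_subset (hball h3)⟩
    exact absurd (le_csSup hTb h4) (not_le.mpr h1)
  refine ⟨t₀, ⟨ht₀mem.2.1, ht₀lt⟩, ?_⟩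
  rw [hG.frontier_eq]
  exact ⟨ht₀mem.1, hnotint⟩

end Frontier

section Constants
variable {N : E → ℝ} (K : SmoothingKernel E N)

lemma frontier_subset_G : frontier K.G ⊆ K.G := by
  rw [K.G_compact.isClosed.frontier_eq]; exact Set.diff_subset

lemma exists_delta [Nontrivial E] (hN : IsNorm N) :
    ∃ δ : ℝ, 0 < δ ∧ ∀ q ∈ frontier K.G, N q + δ ≤ K.φ q := by
  -- frontier is nonempty
  obtain ⟨R, hR⟩ := K.G_compact.isBounded.subset_closedBall 0
  obtain ⟨v, hv⟩ := exists_ne (0:E)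
  set b := ((R + 1) / ‖v‖) • v with hb
  have hvn : (0:ℝ) < ‖v‖ := norm_pos_iff.mpr hv
  have hbR : ‖b‖ = |R + 1| := by
    rw [hb, norm_smul, Real.norm_eq_abs, abs_div, abs_of_pos hvn, div_mul_cancel₀ _ hvn.ne']
  have hRpos : (0:ℝ) ≤ R := by
    have := hR (interior_subset K.zero_mem_int)
    simpa using this
  have hbG : b ∉ K.G := by
    intro h
    have := hR h
    rw [Metric.mem_closedBall, dist_zero_right, hbR, abs_of_pos (by linarith)] at this
    linarith
  have hfne : (frontier K.G).Nonempty := by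
    by_contra hemp
    rw [Set.not_nonempty_iff_eq_empty] at hemp
    have hclopen : IsClopen K.G := isClopen_iff_frontier_eq_empty.mpr hemp
    have := hclopen.eq_univ (α := E) ⟨0, interior_subset K.zero_mem_int⟩
    exact hbG (this ▸ Set.mem_univ b)
  have hfcomp : IsCompact (frontier K.G) :=
    K.G_compact.of_isClosed_subset isClosed_frontier (frontier_subset_G K)
  have hcont : ContinuousOn (fun q => K.φ q - N q) (frontier K.G) := by
    apply ContinuousOn.sub
    · exact (K.φ_smooth.continuousOn).mono ((frontier_subset_G K).trans K.G_sub_dom)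
    · exact hN.continuous.continuousOn
  obtain ⟨q₀, hq₀, hq₀min⟩ := hfcomp.exists_isMinOn hfne hcont
  refine ⟨K.φ q₀ - N q₀, by linarith [K.φ_gt_norm q₀ hq₀], fun q hq => ?_⟩
  have h2 : K.φ q₀ - N q₀ ≤ K.φ q - N q := hq₀min hq
  linarith

lemma exists_L {C : ℝ} (hf : MemC N f) (hCu : ∀ x : E, N x ≤ C * ‖x‖) (hC : 0 < C) :
    ∃ L : ℝ, 0 < L ∧ ∀ (x p q : E), p ∈ K.G → q ∈ K.G →
      f (x + p) + K.φ p - (f (x + q) + K.φ q) ≤ L * ‖p - q‖ := by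
  have hfd : ContinuousOn (fderiv ℝ K.φ) K.dom :=
    K.φ_smooth.continuousOn_fderiv_of_isOpen K.dom_open (by norm_num)
  obtain ⟨B, hB⟩ := K.G_compact.exists_bound_of_continuousOn (hfd.mono K.G_sub_dom)
  have hB0 : 0 ≤ B := le_trans (norm_nonneg _) (hB 0 (interior_subset K.zero_mem_int))
  refine ⟨B + C, by linarith, fun x p q hp hq => ?_⟩
  have hφ : ‖K.φ p - K.φ q‖ ≤ B * ‖p - q‖ := by
    apply K.G_convex.norm_image_sub_le_of_norm_fderiv_le
      (fun y hy => K_diffAt K (K.G_sub_dom hy)) hB hq hp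
  have hfpart : f (x + p) - f (x + q) ≤ C * ‖p - q‖ := by
    have h1 := hf.2 (x + p) (x + q)
    have h2 : x + p - (x + q) = p - q := by abel
    rw [h2] at h1
    have := hCu (p - q)
    calc f (x + p) - f (x + q) ≤ |f (x + p) - f (x + q)| := le_abs_self _
      _ ≤ N (p - q) := h1
      _ ≤ C * ‖p - q‖ := this
  have hφ' : K.φ p - K.φ q ≤ B * ‖p - q‖ :=
    (le_abs_self _).trans (by rwa [Real.norm_eq_abs] at hφ)
  nlinarith [norm_nonneg (p - q)]

end Constants

section Attain
variable {N : E → ℝ} (K : SmoothingKernel E N) {f : E → ℝ}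

lemma lip_continuous {C : ℝ} (hlip : LipWrt N f) (hCu : ∀ x : E, N x ≤ C * ‖x‖)
    (hC : 0 ≤ C) : Continuous f := by
  apply LipschitzWith.continuous (K := (⟨C, hC⟩ : NNReal))
  apply LipschitzWith.of_dist_le_mul
  intro x y
  rw [Real.dist_eq, dist_eq_norm]
  exact (hlip x y).trans (hCu (x - y))

lemma psi_convex (hf : MemC N f) (x : E) :
    ConvexOn ℝ K.dom (fun h => f (x + h) + K.φ h) := by
  refine ConvexOn.add ⟨K.dom_convex, fun p _ q _ a b ha hb hab => ?_⟩ K.φ_convex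
  have key : x + (a • p + b • q) = a • (x + p) + b • (x + q) := by
    have : a • (x + p) + b • (x + q) = (a + b) • x + (a • p + b • q) := by module
    rw [this, hab, one_smul]
  dsimp only
  rw [key]
  exact hf.1.2 (Set.mem_univ (x + p)) (Set.mem_univ (x + q)) ha hb hab

lemma exists_min {C δ L r₀ : ℝ} (hf : MemC N f) (hCu : ∀ x : E, N x ≤ C * ‖x‖) (hC : 0 < C)
    (hδ : 0 < δ) (hδf : ∀ q ∈ frontier K.G, N q + δ ≤ K.φ q)
    (hL0 : 0 < L)
    (hL : ∀ (x p q : E), p ∈ K.G → q ∈ K.G →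
      f (x + p) + K.φ p - (f (x + q) + K.φ q) ≤ L * ‖p - q‖)
    (hr₀pos : 0 < r₀) (hr₀ : L * r₀ < δ) (x : E) :
    ∃ h : E, h ∈ interior K.G ∧ (∀ u : E, ‖u‖ ≤ r₀ → h + u ∈ K.G) ∧
      (∀ h' ∈ K.dom, f (x + h) + K.φ h ≤ f (x + h') + K.φ h') ∧
      smoothing K f x = f (x + h) + K.φ h := by
  set ψ : E → ℝ := fun h => f (x + h) + K.φ h with hψ
  have hG0 : (0:E) ∈ K.G := interior_subset K.zero_mem_int
  have hψ0 : ψ 0 = f x := by simp [hψ, K.φ_zero]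
  have fcont : Continuous f := lip_continuous hf.2 hCu hC.le
  have hψcont : ContinuousOn ψ K.G := by
    apply ContinuousOn.add
    · exact ((fcont.comp (continuous_const.add continuous_id)).continuousOn)
    · exact K.φ_smooth.continuousOn.mono K.G_sub_dom
  obtain ⟨h₀, hh₀G, hh₀min⟩ := K.G_compact.exists_isMinOn ⟨0, hG0⟩ hψcont
  have hmin0 : ψ h₀ ≤ f x := by rw [← hψ0]; exact hh₀min hG0
  -- frontier lower bound
  have hfr : ∀ q ∈ frontier K.G, f x + δ ≤ ψ q := by
    intro q hq
    have h1 := hf.2 (x + q) x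
    have h2 : x + q - x = q := by abel
    rw [h2] at h1
    have h3 : f x - N q ≤ f (x + q) := by
      have := abs_le.mp h1
      linarith [this.1]
    have h4 := hδf q hq
    simp only [hψ]
    linarith
  -- outside bound
  have hout : ∀ h' ∈ K.dom, h' ∉ K.G → f x + δ ≤ ψ h' := by
    intro h' hd hnG
    obtain ⟨t, ⟨ht0, ht1⟩, htf⟩ :=
      segment_hits_frontier K.G_compact.isClosed K.zero_mem_int hnG
    have hq : (0:E) + t • (h' - 0) = t • h' := by simp
    rw [hq] at htf
    have htpos : 0 < t := by
      rcases ht0.lt_or_eq with h | h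
      · exact h
      · exfalso
        rw [← h] at htf
        simp only [zero_smul] at htf
        rw [K.G_compact.isClosed.frontier_eq] at htf
        exact htf.2 K.zero_mem_int
    have hqdom : t • h' ∈ K.dom := K.G_sub_dom (frontier_subset_G K htf)
    have hcvx := (psi_convex K hf x).2 K.zero_mem_dom hd (by linarith : (0:ℝ) ≤ 1 - t)
      ht0 (by ring)
    simp only [smul_zero, zero_add] at hcvx
    have h5 : ψ (t • h') ≤ (1 - t) * f x + t * ψ h' := by
      rw [← hψ0]; exact hcvx
    have h6 := hfr _ htf
    nlinarith [h6, h5, ht1]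
  -- global min
  have hminall : ∀ h' ∈ K.dom, ψ h₀ ≤ ψ h' := by
    intro h' hd
    by_cases hG : h' ∈ K.G
    · exact hh₀min hG
    · linarith [hout h' hd hG, hmin0, hδ]
  -- h₀ interior
  have hh₀int : h₀ ∈ interior K.G := by
    by_contra hni
    have : h₀ ∈ frontier K.G := by
      rw [K.G_compact.isClosed.frontier_eq]; exact ⟨hh₀G, hni⟩
    linarith [hfr h₀ this, hmin0, hδ]
  -- ball property
  have hball : ∀ u : E, ‖u‖ ≤ r₀ → h₀ + u ∈ K.G := by
    intro u hu
    by_contra hnG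
    obtain ⟨t, ⟨ht0, ht1⟩, htf⟩ :=
      segment_hits_frontier K.G_compact.isClosed hh₀int hnG
    have hq : h₀ + t • (h₀ + u - h₀) = h₀ + t • u := by
      congr 1; congr 1; abel
    rw [hq] at htf
    have hqG : h₀ + t • u ∈ K.G := frontier_subset_G K htf
    have hlip := hL x (h₀ + t • u) h₀ hqG hh₀G
    have h7 : h₀ + t • u - h₀ = t • u := by abel
    rw [h7] at hlip
    have h8 : ‖t • u‖ ≤ r₀ := by
      rw [norm_smul, Real.norm_eq_abs, abs_of_nonneg ht0]
      calc t * ‖u‖ ≤ 1 * ‖u‖ := by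
            apply mul_le_mul_of_nonneg_right (by linarith) (norm_nonneg u)
        _ ≤ r₀ := by linarith
    have h9 := hfr _ htf
    have h10 : L * ‖t • u‖ ≤ L * r₀ := mul_le_mul_of_nonneg_left h8 hL0.le
    simp only [hψ] at h9 hmin0 hlip
    linarith
  refine ⟨h₀, hh₀int, hball, hminall, ?_⟩
  apply le_antisymm
  · apply csInf_le
    · refine ⟨ψ h₀, ?_⟩
      rintro r ⟨h', hd, rfl⟩
      exact hminall h' hd
    · exact ⟨h₀, K.G_sub_dom hh₀G, rfl⟩
  · refine le_csInf ⟨ψ 0, Set.mem_image_of_mem _ K.zero_mem_dom⟩ ?_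
    rintro r ⟨h', hd, rfl⟩
    exact hminall h' hd

end Attain

section Coco
variable {N : E → ℝ} {c C : ℝ}

lemma dualNorm_neg (hN : IsNorm N) (hc : 0 < c) (hcl : ∀ x : E, c * ‖x‖ ≤ N x) (ξ : E) :
    dualNorm N (-ξ) = dualNorm N ξ := by
  have key : ∀ η : E, dualNorm N (-η) ≤ dualNorm N η := by
    intro η
    obtain ⟨w, hw, hmax⟩ := dualNorm_exists_max hN hc hcl (-η)
    rw [hmax]
    have hw' : N (-w) ≤ 1 := by rw [hN.neg]; exact hw
    have := le_dualNorm hN hc hcl η (-w) hw'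
    rw [inner_neg_left]
    rwa [inner_neg_right] at this
  have h1 := key ξ
  have h2 := key (-ξ)
  rw [neg_neg] at h2
  exact le_antisymm h1 h2

lemma grad_lip_of_descent (hN : IsNorm N) (hc : 0 < c) (hcl : ∀ x : E, c * ‖x‖ ≤ N x)
    {F : E → ℝ} {g : E → E} {M r₀ : ℝ} (hM : 0 < M) (hr : 0 < r₀)
    (hdesc : ∀ x d : E, ‖d‖ ≤ r₀ → F (x + d) ≤ F x + (inner ℝ (g x) d : ℝ) + M / 2 * N d ^ 2)
    (hsub : ∀ x y : E, F x + (inner ℝ (g x) (y - x) : ℝ) ≤ F y) :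
    ∀ y z : E, dualNorm N (g y - g z) ≤ M * N (y - z) := by
  set τ := c * r₀ with hτ
  have hτpos : 0 < τ := mul_pos hc hr
  -- the fundamental inequality
  have main : ∀ y z t : ℝ → ℝ, True := fun _ _ _ => trivial
  clear main
  have main : ∀ y z : E, ∀ t : ℝ, 0 ≤ t → t ≤ τ →
      t * dualNorm N (g y - g z) ≤
        (F z - F y - (inner ℝ (g y) (z - y) : ℝ)) + M / 2 * t ^ 2 := by
    intro y z t ht0 htτ
    obtain ⟨w, hw, hmax⟩ := dualNorm_exists_max hN hc hcl (g y - g z)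
    set d := t • w with hd
    have hwn : ‖w‖ ≤ 1 / c := by
      rw [le_div_iff₀ hc, mul_comm]
      exact (hcl w).trans hw
    have hdn : ‖d‖ ≤ r₀ := by
      rw [hd, norm_smul, Real.norm_eq_abs, abs_of_nonneg ht0]
      calc t * ‖w‖ ≤ τ * (1 / c) := by
            apply mul_le_mul htτ hwn (norm_nonneg w) hτpos.le
        _ = r₀ := by rw [hτ]; field_simp
    have hNd : N d ≤ t := by
      rw [hd, hN.smul, abs_of_nonneg ht0]
      calc t * N w ≤ t * 1 := mul_le_mul_of_nonneg_left hw ht0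
        _ = t := mul_one t
    have hNd2 : N d ^ 2 ≤ t ^ 2 := by
      have := hN.nonneg d
      nlinarith
    have h1 := hsub y (z + d)
    have h2 := hdesc z d hdn
    have h3 : (inner ℝ (g y) (z + d - y) : ℝ) = inner ℝ (g y) (z - y) + (inner ℝ (g y) d : ℝ) := by
      rw [show z + d - y = (z - y) + d by abel, inner_add_right]
    have h4 : (inner ℝ (g y) d : ℝ) - inner ℝ (g z) d = inner ℝ (g y - g z) d := by
      rw [inner_sub_left]
    have h5 : (inner ℝ (g y - g z) d : ℝ) = t * dualNorm N (g y - g z) := by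
      rw [hd, inner_smul_right, hmax]
    have h6 : M / 2 * N d ^ 2 ≤ M / 2 * t ^ 2 :=
      mul_le_mul_of_nonneg_left hNd2 (by linarith)
    nlinarith [h1, h2, h3, h4, h5, h6]
  have hsym : ∀ y z : E, dualNorm N (g z - g y) = dualNorm N (g y - g z) := by
    intro y z
    rw [show g z - g y = -(g y - g z) by abel, dualNorm_neg hN hc hcl]
  have hDnn : ∀ y z : E, 0 ≤ F z - F y - (inner ℝ (g y) (z - y) : ℝ) := by
    intro y z; linarith [hsub y z]
  have hpair : ∀ y z : E,
      (F z - F y - (inner ℝ (g y) (z - y) : ℝ)) + (F y - F z - (inner ℝ (g z) (y - z) : ℝ))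
        ≤ dualNorm N (g y - g z) * N (y - z) := by
    intro y z
    have h1 : (F z - F y - (inner ℝ (g y) (z - y) : ℝ)) + (F y - F z - (inner ℝ (g z) (y - z) : ℝ))
        = (inner ℝ (g y - g z) (y - z) : ℝ) := by
      rw [inner_sub_left]
      have h2 : (inner ℝ (g y) (z - y) : ℝ) = - inner ℝ (g y) (y - z) := by
        rw [show z - y = -(y - z) by abel, inner_neg_right]
      rw [h2]; ring
    rw [h1]
    exact inner_le_dualNorm_mul hN hc hcl _ _
  -- local estimate
  have loc : ∀ y z : E, N (y - z) ≤ τ / 2 → dualNorm N (g y - g z) ≤ M * N (y - z) := by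
    intro y z hyz
    set s := dualNorm N (g y - g z) with hs
    have hs0 : 0 ≤ s := dualNorm_nonneg hN hc hcl _
    have hNyz : 0 ≤ N (y - z) := hN.nonneg _
    have hNzy : N (z - y) = N (y - z) := by
      rw [show z - y = -(y - z) by abel, hN.neg]
    have hbound : s ≤ M * τ := by
      by_contra hcon
      push_neg at hcon
      have i1 := main y z τ hτpos.le le_rfl
      have i2 := main z y τ hτpos.le le_rfl
      rw [hsym y z] at i2
      have hp := hpair y z
      nlinarith
    have ht0 : 0 ≤ s / M := div_nonneg hs0 hM.le
    have htτ : s / M ≤ τ := by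
      rw [div_le_iff₀ hM]; linarith [hbound]
    have i1 := main y z (s / M) ht0 htτ
    have i2 := main z y (s / M) ht0 htτ
    rw [hsym y z] at i2
    have hp := hpair y z
    have hsq : M / 2 * (s / M) ^ 2 = s ^ 2 / (2 * M) := by
      field_simp
    rw [hsq] at i1 i2
    have hss : s / M * s = s ^ 2 / M := by field_simp
    rw [hss] at i1 i2
    -- s^2/M ≤ D1 + s^2/(2M) each ⇒ s^2/M ≤ P ≤ s N
    have key : s ^ 2 / M ≤ s * N (y - z) := by
      rw [← hs] at hp
      have hM' : M ≠ 0 := hM.ne'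
      have e1 : 2 * (s ^ 2 / (2 * M)) = s ^ 2 / M := by field_simp
      linarith
    have key2 : s ^ 2 ≤ s * N (y - z) * M := (div_le_iff₀ hM).mp key
    rcases hs0.lt_or_eq with h | h
    · nlinarith
    · rw [← h]; positivity
  -- global by dyadic subdivision
  have glob : ∀ n : ℕ, ∀ y z : E, N (y - z) ≤ 2 ^ n * (τ / 2) →
      dualNorm N (g y - g z) ≤ M * N (y - z) := by
    intro n
    induction n with
    | zero => intro y z h; exact loc y z (by simpa using h)
    | succ n ih =>
      intro y z h
      set m := (2:ℝ)⁻¹ • (y + z) with hm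
      have hym : y - m = (2:ℝ)⁻¹ • (y - z) := by rw [hm]; module
      have hmz : m - z = (2:ℝ)⁻¹ • (y - z) := by rw [hm]; module
      have hNym : N (y - m) = 2⁻¹ * N (y - z) := by
        rw [hym, hN.smul]; norm_num
      have hNmz : N (m - z) = 2⁻¹ * N (y - z) := by
        rw [hmz, hN.smul]; norm_num
      have h1 : N (y - m) ≤ 2 ^ n * (τ / 2) := by
        rw [hNym, pow_succ] at *
        nlinarith [hN.nonneg (y - z)]
      have h2 : N (m - z) ≤ 2 ^ n * (τ / 2) := by
        rw [hNmz, pow_succ] at *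
        nlinarith [hN.nonneg (y - z)]
      have t1 := ih y m h1
      have t2 := ih m z h2
      have tri : dualNorm N (g y - g z) ≤ dualNorm N (g y - g m) + dualNorm N (g m - g z) := by
        have htr := dualNorm_add_le hN hc hcl (g y - g m) (g m - g z)
        rw [show g y - g m + (g m - g z) = g y - g z by abel] at htr
        exact htr
      rw [hNym] at t1
      rw [hNmz] at t2
      linarith
  intro y z
  obtain ⟨n, hn⟩ := pow_unbounded_of_one_lt (N (y - z) / (τ / 2)) (by norm_num : (1:ℝ) < 2)
  apply glob n
  rw [div_lt_iff₀ (by linarith : (0:ℝ) < τ / 2)] at hn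
  linarith

end Coco

section Main
open InnerProductSpace

lemma frontier_nonempty {N : E → ℝ} (K : SmoothingKernel E N) [Nontrivial E] :
    (frontier K.G).Nonempty := by
  obtain ⟨R, hR⟩ := K.G_compact.isBounded.subset_closedBall 0
  obtain ⟨v, hv⟩ := exists_ne (0:E)
  have hvn : (0:ℝ) < ‖v‖ := norm_pos_iff.mpr hv
  have hRpos : (0:ℝ) ≤ R := by
    have := hR (interior_subset K.zero_mem_int)
    simpa using this
  have hbG : ((R + 1) / ‖v‖) • v ∉ K.G := by
    intro h
    have h2 := hR h
    rw [Metric.mem_closedBall, dist_zero_right, norm_smul, Real.norm_eq_abs, abs_div,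
      abs_of_pos hvn, div_mul_cancel₀ _ hvn.ne', abs_of_pos (by linarith)] at h2
    linarith
  by_contra hemp
  rw [Set.not_nonempty_iff_eq_empty] at hemp
  have hclopen : IsClopen K.G := isClopen_iff_frontier_eq_empty.mpr hemp
  have := hclopen.eq_univ (α := E) ⟨0, interior_subset K.zero_mem_int⟩
  exact hbG (this ▸ Set.mem_univ _)

lemma main_nontrivial [Nontrivial E] {N : E → ℝ} (hN : IsNorm N) (K : SmoothingKernel E N)
    (M : ℝ) (hM : HessBound K M) (f : E → ℝ) (hf : MemC N f) :
    ContDiff ℝ 1 (smoothing K f) ∧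
      ∀ x y : E, dualNorm N (gradient (smoothing K f) x - gradient (smoothing K f) y)
        ≤ M * N (x - y) := by
  obtain ⟨c, C, hc, hC, hbounds⟩ := hN.exists_bounds
  have hcl : ∀ x : E, c * ‖x‖ ≤ N x := fun x => (hbounds x).1
  have hCu : ∀ x : E, N x ≤ C * ‖x‖ := fun x => (hbounds x).2
  obtain ⟨δ, hδ, hδf⟩ := exists_delta K hN
  obtain ⟨L, hL0, hL⟩ := exists_L K hf hCu hC
  set r₀ := δ / (2 * L) with hr₀def
  have hr₀pos : 0 < r₀ := by positivity
  have hr₀ : L * r₀ < δ := by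
    rw [hr₀def]
    rw [mul_div_assoc']
    rw [div_lt_iff₀ (by positivity)]
    nlinarith
  choose hstar hint hball hminall heq using
    exists_min K hf hCu hC hδ hδf hL0 hL hr₀pos hr₀
  set F := smoothing K f with hF
  set g : E → E := fun x => - gradient K.φ (hstar x) with hg
  have hstarG : ∀ x : E, hstar x ∈ K.G := fun x => interior_subset (hint x)
  have h0G : (0:E) ∈ K.G := interior_subset K.zero_mem_int
  -- M is positive
  have hMpos : 0 < M := by
    obtain ⟨q, hq⟩ := frontier_nonempty K
    have hqG : q ∈ K.G := frontier_subset_G K hq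
    have ht := taylor_upper K hN hM h0G hqG
    rw [K.φ_zero, K.grad_zero, sub_zero, inner_zero_left] at ht
    have h1 := K.φ_gt_norm q hq
    have h2 := hN.nonneg q
    by_contra hcon
    push_neg at hcon
    have h3 : M / 2 * N q ^ 2 ≤ 0 :=
      mul_nonpos_of_nonpos_of_nonneg (by linarith) (sq_nonneg _)
    linarith
  -- descent property
  have hdesc : ∀ x d : E, ‖d‖ ≤ r₀ →
      F (x + d) ≤ F x + (inner ℝ (g x) d : ℝ) + M / 2 * N d ^ 2 := by
    intro x d hd
    have hbd : hstar x + -d ∈ K.G := hball x (-d) (by rwa [norm_neg])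
    have hb0 : hstar x + 0 ∈ K.G := hball x 0 (by simp [hr₀pos.le])
    rw [add_zero] at hb0
    have h1 : F (x + d) ≤ f ((x + d) + (hstar x + -d)) + K.φ (hstar x + -d) := by
      rw [heq (x + d)]
      exact hminall (x + d) (hstar x + -d) (K.G_sub_dom hbd)
    have h2 : (x + d) + (hstar x + -d) = x + hstar x := by abel
    rw [h2] at h1
    have h3 := taylor_upper K hN hM hb0 hbd
    have h4 : hstar x + -d - hstar x = -d := by abel
    rw [h4, hN.neg] at h3
    have h5 : (inner ℝ (gradient K.φ (hstar x)) (-d) : ℝ) = - inner ℝ (gradient K.φ (hstar x)) d :=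
      inner_neg_right _ _
    have h6 : (inner ℝ (g x) d : ℝ) = - inner ℝ (gradient K.φ (hstar x)) d := by
      rw [hg]; exact inner_neg_left _ _
    have h7 : F x = f (x + hstar x) + K.φ (hstar x) := heq x
    linarith
  -- convexity of F
  have hFconv : ConvexOn ℝ Set.univ F := by
    refine ⟨convex_univ, fun x _ y _ a b ha hb hab => ?_⟩
    set hx := hstar x
    set hy := hstar y
    have hxdom : hx ∈ K.dom := K.G_sub_dom (hstarG x)
    have hydom : hy ∈ K.dom := K.G_sub_dom (hstarG y)
    have hcdom : a • hx + b • hy ∈ K.dom := K.dom_convex hxdom hydom ha hb hab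
    have h1 : F (a • x + b • y) ≤
        f ((a • x + b • y) + (a • hx + b • hy)) + K.φ (a • hx + b • hy) := by
      rw [heq (a • x + b • y)]
      exact hminall _ _ hcdom
    have h2 : (a • x + b • y) + (a • hx + b • hy) = a • (x + hx) + b • (y + hy) := by
      module
    rw [h2] at h1
    have h3 : f (a • (x + hx) + b • (y + hy)) ≤ a * f (x + hx) + b * f (y + hy) :=
      hf.1.2 (Set.mem_univ _) (Set.mem_univ _) ha hb hab
    have h4 : K.φ (a • hx + b • hy) ≤ a * K.φ hx + b * K.φ hy :=
      K.φ_convex.2 hxdom hydom ha hb hab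
    have h5 : F x = f (x + hx) + K.φ hx := heq x
    have h6 : F y = f (y + hy) + K.φ hy := heq y
    have h7 : a * F x = a * f (x + hx) + a * K.φ hx := by rw [h5]; ring
    have h8 : b * F y = b * f (y + hy) + b * K.φ hy := by rw [h6]; ring
    simp only [smul_eq_mul]
    linarith
  -- two-sided bound
  have hts : ∀ x d : E, ‖d‖ ≤ r₀ →
      |F (x + d) - F x - (inner ℝ (g x) d : ℝ)| ≤ M / 2 * N d ^ 2 := by
    intro x d hd
    have hup := hdesc x d hd
    have hdn := hdesc x (-d) (by rwa [norm_neg])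
    rw [hN.neg, inner_neg_right] at hdn
    have hmid : F x ≤ (1/2 : ℝ) * F (x + d) + (1/2 : ℝ) * F (x - d) := by
      have hxeq : x = (1/2 : ℝ) • (x + d) + (1/2 : ℝ) • (x - d) := by module
      have := hFconv.2 (Set.mem_univ (x + d)) (Set.mem_univ (x - d))
        (by norm_num : (0:ℝ) ≤ 1/2) (by norm_num : (0:ℝ) ≤ 1/2) (by norm_num)
      simp only [smul_eq_mul] at this
      calc F x = F ((1/2 : ℝ) • (x + d) + (1/2 : ℝ) • (x - d)) := by rw [← hxeq]
        _ ≤ _ := this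
    have hsubde : x + -d = x - d := by abel
    rw [hsubde] at hdn
    rw [abs_le]
    constructor
    · nlinarith [hdn, hmid]
    · linarith
  -- differentiability
  have hfd : ∀ x : E, HasFDerivAt F (toDual ℝ E (g x)) x := by
    intro x
    rw [hasFDerivAt_iff_isLittleO_nhds_zero]
    rw [Asymptotics.isLittleO_iff]
    intro ε hε
    set κ := M / 2 * C ^ 2 with hκ
    have hκpos : 0 < κ := by positivity
    rw [Metric.eventually_nhds_iff]
    refine ⟨min r₀ (ε / (κ + 1)), by positivity, fun {d} hdist => ?_⟩
    rw [dist_zero_right] at hdist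
    have hd1 : ‖d‖ ≤ r₀ := le_of_lt (lt_of_lt_of_le hdist (min_le_left _ _))
    have hd2 : ‖d‖ ≤ ε / (κ + 1) := le_of_lt (lt_of_lt_of_le hdist (min_le_right _ _))
    have hb := hts x d hd1
    have hNd : N d ≤ C * ‖d‖ := hCu d
    have hNd2 : N d ^ 2 ≤ C ^ 2 * ‖d‖ ^ 2 := by
      have := hN.nonneg d
      nlinarith [norm_nonneg d]
    have hbb : |F (x + d) - F x - (inner ℝ (g x) d : ℝ)| ≤ κ * ‖d‖ ^ 2 := by
      calc |F (x + d) - F x - (inner ℝ (g x) d : ℝ)| ≤ M / 2 * N d ^ 2 := hb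
        _ ≤ M / 2 * (C ^ 2 * ‖d‖ ^ 2) := by
            apply mul_le_mul_of_nonneg_left hNd2 (by linarith)
        _ = κ * ‖d‖ ^ 2 := by rw [hκ]; ring
    have htd : (toDual ℝ E (g x)) d = (inner ℝ (g x) d : ℝ) := rfl
    rw [Real.norm_eq_abs, htd]
    calc |F (x + d) - F x - (inner ℝ (g x) d : ℝ)| ≤ κ * ‖d‖ ^ 2 := hbb
      _ = (κ * ‖d‖) * ‖d‖ := by ring
      _ ≤ ε * ‖d‖ := by
          apply mul_le_mul_of_nonneg_right _ (norm_nonneg d)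
          calc κ * ‖d‖ ≤ κ * (ε / (κ + 1)) := mul_le_mul_of_nonneg_left hd2 hκpos.le
            _ ≤ ε := by
                rw [mul_comm, div_mul_eq_mul_div, div_le_iff₀ (by positivity : (0:ℝ) < κ + 1)]
                nlinarith
  -- gradient formula
  have hgrad : ∀ x : E, gradient F x = g x := by
    intro x
    rw [gradient, (hfd x).fderiv, LinearIsometryEquiv.symm_apply_apply]
  -- global subgradient inequality
  have hsub : ∀ x y : E, F x + (inner ℝ (g x) (y - x) : ℝ) ≤ F y := by
    intro x y
    have h1 := convex_ge_of_fderiv hFconv (hfd x).differentiableAt (Set.mem_univ x)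
      (Set.mem_univ y)
    rw [(hfd x).fderiv] at h1
    exact h1
  have hlip := grad_lip_of_descent hN hc hcl hMpos hr₀pos hdesc hsub
  -- continuity of the gradient
  have hgLip : ∀ y z : E, ‖g y - g z‖ ≤ C * M * C * ‖y - z‖ := by
    intro y z
    have h1 := norm_le_dualNorm hN hc hcl hCu hC (g y - g z)
    have h2 : dualNorm N (g y - g z) ≤ M * N (y - z) := hlip y z
    have h3 : N (y - z) ≤ C * ‖y - z‖ := hCu _
    calc ‖g y - g z‖ ≤ C * dualNorm N (g y - g z) := h1
      _ ≤ C * (M * N (y - z)) := mul_le_mul_of_nonneg_left h2 hC.le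
      _ ≤ C * (M * (C * ‖y - z‖)) := by
          apply mul_le_mul_of_nonneg_left _ hC.le
          exact mul_le_mul_of_nonneg_left h3 hMpos.le
      _ = C * M * C * ‖y - z‖ := by ring
  have hgcont : Continuous g := by
    apply LipschitzWith.continuous (K := Real.toNNReal (C * M * C))
    apply LipschitzWith.of_dist_le_mul
    intro y z
    rw [dist_eq_norm, dist_eq_norm]
    rw [Real.coe_toNNReal _ (by positivity)]
    exact hgLip y z
  have hFD : Differentiable ℝ F := fun x => (hfd x).differentiableAt
  have hfdeq : fderiv ℝ F = fun x => toDual ℝ E (g x) := funext fun x => (hfd x).fderiv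
  constructor
  · rw [contDiff_one_iff_fderiv]
    refine ⟨hFD, ?_⟩
    rw [hfdeq]
    exact (toDual ℝ E).continuous.comp hgcont
  · intro x y
    rw [hgrad x, hgrad y]
    exact hlip x y

end Main


/-- for any `f ∈ C_{‖·‖}`, the smoothing `S[f]` is continuously differentiable
with `M_φ`-Lipschitz gradient: `‖∇S[f](x) − ∇S[f](y)‖_* ≤ M_φ ‖x − y‖` for all `x, y`. -/
theorem smoothing_gradient_lipschitz
    {N : E → ℝ} (hN : IsNorm N) (K : SmoothingKernel E N) (M : ℝ) (hM : HessBound K M)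
    (f : E → ℝ) (hf : MemC N f) :
    ContDiff ℝ 1 (smoothing K f) ∧
      ∀ x y : E, dualNorm N (gradient (smoothing K f) x - gradient (smoothing K f) y)
        ≤ M * N (x - y) := by
  rcases subsingleton_or_nontrivial E with hE | hE
  · constructor
    · have hconst : smoothing K f = fun _ => smoothing K f 0 :=
        funext fun x => by rw [Subsingleton.elim x 0]
      rw [hconst]; exact contDiff_const
    · intro x y
      have hxy : x = y := Subsingleton.elim x y
      subst hxy
      simp only [sub_self]
      rw [hN.zero, mul_zero]
      have himg : (fun x : E => (inner ℝ (0:E) x : ℝ)) '' {x : E | N x ≤ 1} = {0} := by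
        apply Set.eq_singleton_iff_unique_mem.mpr
        constructor
        · exact ⟨0, by simp [hN.zero], by simp⟩
        · rintro r ⟨z, hz, rfl⟩; simp
      rw [dualNorm, himg, csSup_singleton]
  · exact main_nontrivial hN K M hM f hf
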